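/- With the notation above, if λ ∉ σ_ess(A_N) ∩ σ_ess(A_D), then G_λ⁰ = ker B_λ equals E_D(λ)H + E_N(λ)H; i.e., every u ∈ G_λ with a[u,v] = λ(u,v) for all v ∈ G_λ is a sum of a Dirichlet λ-eigenvector and a Neumann λ-eigenvector. -/

import Mathlib

noncomputable section

open scoped InnerProductSpace

local notation "⟪" x ", " y "⟫" => @inner ℂ _ _ x y

variable {H H1 : Type*} [NormedAddCommGroup H] [InnerProductSpace ℂ H] [CompleteSpace H]
  [NormedAddCommGroup H1] [InnerProductSpace ℂ H1] [CompleteSpace H1]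

/-- `MemA J H0 u f` says that `u` belongs to the domain `H¹_A` of the maximal
operator `A` (i.e. the functional `v ↦ a[u,v]` on `H0` is `H`-continuous) and
`A u = f`:  `a[u, v] = (f, v)` for all `v ∈ H0`. -/
def MemA (J : H1 →L[ℂ] H) (H0 : Submodule ℂ H1) (u : H1) (f : H) : Prop :=
  ∀ v ∈ H0, ⟪u, (v : H1)⟫ = ⟪f, J v⟫

open Filter Topology in
/-- Weyl (singular sequence) characterization of `λ ∈ σ_ess(A_B)`, phrased via the
bounded inverse `K = J ∘ T_B = A_B⁻¹ : H → H`:  there exists a normalized sequence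
converging weakly to `0` with `‖x_n - λ K x_n‖ = ‖K (A_B - λ) x_n‖ → 0`. -/
def InEssSpec (K : H →L[ℂ] H) (lam : ℝ) : Prop :=
  ∃ x : ℕ → H, (∀ n, ‖x n‖ = 1) ∧
    (∀ y : H, Tendsto (fun n => (⟪y, x n⟫ : ℂ)) atTop (𝓝 0)) ∧
    Tendsto (fun n => ‖x n - (lam : ℂ) • K (x n)‖) atTop (𝓝 0)


set_option linter.unusedSectionVars false
set_option maxHeartbeats 1000000

section Aux
open Filter Topology

-- Cauchy domination helper
lemma cauchy_dom {X Y : Type*} [NormedAddCommGroup X] [NormedAddCommGroup Y]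
    {f : ℕ → X} {g : ℕ → Y} {C : ℝ} (hC : 0 < C) (hf : CauchySeq f)
    (h : ∀ i j, ‖g i - g j‖ ≤ C * ‖f i - f j‖) : CauchySeq g := by
  rw [Metric.cauchySeq_iff] at hf ⊢
  intro ε hε
  obtain ⟨N, hN⟩ := hf (ε / C) (by positivity)
  refine ⟨N, fun m hm n hn => ?_⟩
  have h1 := hN m hm n hn
  rw [dist_eq_norm] at h1 ⊢
  calc ‖g m - g n‖ ≤ C * ‖f m - f n‖ := h m n
    _ < C * (ε / C) := by exact mul_lt_mul_of_pos_left h1 hC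
    _ = ε := by field_simp

-- sup of a subspace with orthogonal projection and a finite-dimensional subspace is closed
lemma sup_closed {E : Type*} [NormedAddCommGroup E] [InnerProductSpace ℂ E]
    (K F' : Submodule ℂ E) [K.HasOrthogonalProjection] [FiniteDimensional ℂ F'] :
    IsClosed ((K ⊔ F' : Submodule ℂ E) : Set E) := by
  classical
  set Q : E →L[ℂ] E := ContinuousLinearMap.id ℂ E - K.subtypeL.comp (Submodule.orthogonalProjection K) with hQ
  have hQapply : ∀ x : E, Q x = x - (Submodule.orthogonalProjection K x : E) := fun x => rfl
  set M : Submodule ℂ E := F'.map (Q : E →ₗ[ℂ] E) with hM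
  have hMfd : FiniteDimensional ℂ M := Module.Finite.map _ _
  have hset : ((K ⊔ F' : Submodule ℂ E) : Set E) = Q ⁻¹' (M : Set E) := by
    ext x
    constructor
    · rintro hx
      obtain ⟨k, hk, f, hfm, rfl⟩ := Submodule.mem_sup.mp hx
      have : Q (k + f) = Q f := by
        simp only [map_add, hQapply]
        have : (Submodule.orthogonalProjection K k : E) = k := by
          have := Submodule.orthogonalProjection_mem_subspace_eq_self (K := K) ⟨k, hk⟩
          simpa using congrArg (Submodule.subtype K) this
        rw [Submodule.coe_add, this]
        abel
      simp only [Set.mem_preimage, this]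
      exact ⟨f, hfm, rfl⟩
    · intro hx
      obtain ⟨f, hfm, hfx⟩ := hx
      have hx1 : x = (Submodule.orthogonalProjection K x : E) + Q x := by
        rw [hQapply]; abel
      have hQf : Q x = f - (Submodule.orthogonalProjection K f : E) := by
        rw [← hfx]; exact hQapply f
      rw [hx1, hQf]
      refine Submodule.add_mem _ (Submodule.mem_sup_left (Submodule.coe_mem _)) ?_
      exact Submodule.sub_mem _ (Submodule.mem_sup_right hfm)
        (Submodule.mem_sup_left (Submodule.coe_mem _))
  rw [hset]
  exact (Submodule.closed_of_finiteDimensional M).preimage Q.continuous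

variable {E F : Type*} [NormedAddCommGroup E] [InnerProductSpace ℂ E] [CompleteSpace E]
  [NormedAddCommGroup F] [InnerProductSpace ℂ F] [CompleteSpace F]

/-- `S = I - λ T J`. -/
def opS (Jm : E →L[ℂ] F) (T : F →L[ℂ] E) (lam : ℝ) : E →L[ℂ] E :=
  ContinuousLinearMap.id ℂ E - (lam : ℂ) • T.comp Jm

lemma opS_apply (Jm : E →L[ℂ] F) (T : F →L[ℂ] E) (lam : ℝ) (u : E) :
    opS Jm T lam u = u - (lam : ℂ) • T (Jm u) := rfl

lemma opS_selfadj (Jm : E →L[ℂ] F) (T : F →L[ℂ] E)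
    (hT : ∀ (x : F) (v : E), ⟪T x, v⟫ = ⟪x, Jm v⟫) (lam : ℝ) (u v : E) :
    ⟪opS Jm T lam u, v⟫ = ⟪u, opS Jm T lam v⟫ := by
  have h1 : ⟪u, T (Jm v)⟫ = ⟪Jm u, Jm v⟫ := by
    rw [← inner_conj_symm, hT, inner_conj_symm]
  rw [opS_apply, opS_apply, inner_sub_left, inner_sub_right, inner_smul_left, inner_smul_right,
    hT, h1, Complex.conj_ofReal]

set_option linter.unusedSectionVars false

lemma transfer (Jm : E →L[ℂ] F) (T : F →L[ℂ] E)
    (hT : ∀ (x : F) (v : E), ⟪T x, v⟫ = ⟪x, Jm v⟫) (lam : ℝ)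
    (u : ℕ → E) (hu1 : ∀ n, ‖u n‖ = 1)
    (hu2 : ∀ y : E, Tendsto (fun n => (⟪y, u n⟫ : ℂ)) atTop (𝓝 0))
    (hu3 : Tendsto (fun n => ‖opS Jm T lam (u n)‖) atTop (𝓝 0)) :
    InEssSpec (Jm.comp T) lam := by
  set a : ℕ → ℝ := fun n => ‖Jm (u n)‖ with ha
  -- ⟪S u n, u n⟫ = 1 - lam * a n ^ 2
  have key : ∀ n, (1 : ℂ) - (lam : ℂ) * ((a n : ℝ) : ℂ) ^ 2 = ⟪opS Jm T lam (u n), u n⟫ := by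
    intro n
    rw [opS_apply, inner_sub_left, inner_smul_left, hT, Complex.conj_ofReal]
    rw [@inner_self_eq_norm_sq_to_K ℂ, @inner_self_eq_norm_sq_to_K ℂ, hu1 n]
    simp only [ha]
    push_cast
    ring_nf
    rfl
  have hbound : ∀ n, |1 - lam * a n ^ 2| ≤ ‖opS Jm T lam (u n)‖ := by
    intro n
    have h1 : ‖⟪opS Jm T lam (u n), u n⟫‖ ≤ ‖opS Jm T lam (u n)‖ * ‖u n‖ := norm_inner_le_norm _ _
    rw [hu1 n, mul_one] at h1
    calc |1 - lam * a n ^ 2| = ‖((1 : ℂ) - (lam : ℂ) * ((a n : ℝ) : ℂ) ^ 2)‖ := by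
          rw [show ((1 : ℂ) - (lam : ℂ) * ((a n : ℝ) : ℂ) ^ 2) = (((1 - lam * a n ^ 2 : ℝ)) : ℂ) by push_cast; ring]
          rw [Complex.norm_real]; rfl
      _ = ‖⟪opS Jm T lam (u n), u n⟫‖ := by rw [key n]
      _ ≤ ‖opS Jm T lam (u n)‖ := h1
  have hlim : Tendsto (fun n => lam * a n ^ 2) atTop (𝓝 1) := by
    have h0 : Tendsto (fun n => 1 - lam * a n ^ 2) atTop (𝓝 0) :=
      squeeze_zero_norm (fun n => by simpa using hbound n) hu3
    have := (tendsto_const_nhds (x := (1 : ℝ))).sub h0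
    simpa using this
  have hlampos : 0 < lam := by
    by_contra hle
    push_neg at hle
    have : (1 : ℝ) ≤ 0 := le_of_tendsto hlim (Eventually.of_forall fun n =>
      mul_nonpos_of_nonpos_of_nonneg hle (sq_nonneg _))
    linarith
  have hasq : Tendsto (fun n => a n ^ 2) atTop (𝓝 lam⁻¹) := by
    have h0 := hlim.const_mul lam⁻¹
    have h3 : (fun n => lam⁻¹ * (lam * a n ^ 2)) = fun n => a n ^ 2 := by
      funext n; field_simp
    rw [h3, mul_one] at h0
    exact h0
  have halim : Tendsto a atTop (𝓝 (Real.sqrt lam⁻¹)) := by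
    have := hasq.sqrt
    have h4 : ∀ n, Real.sqrt (a n ^ 2) = a n := fun n => Real.sqrt_sq (norm_nonneg _)
    simpa [h4] using this
  set δ : ℝ := Real.sqrt lam⁻¹ with hδ
  have hδpos : 0 < δ := Real.sqrt_pos.mpr (by positivity)
  have hev : ∀ᶠ n in atTop, δ / 2 < a n := halim.eventually (eventually_gt_nhds (by linarith))
  obtain ⟨N, hN⟩ := eventually_atTop.mp hev
  refine ⟨fun n => (((a (n + N))⁻¹ : ℝ) : ℂ) • Jm (u (n + N)), ?_, ?_, ?_⟩
  · intro n
    have hpos : 0 < a (n + N) := lt_trans (by positivity) (hN (n + N) (by omega))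
    rw [norm_smul]
    simp [abs_of_pos, hpos.le, Real.norm_eq_abs, abs_of_pos (inv_pos.mpr hpos), ha]
    field_simp
    exact div_self (by simpa [ha] using hpos.ne')
  · intro y
    have hb : ∀ n, ‖(⟪y, (((a (n + N))⁻¹ : ℝ) : ℂ) • Jm (u (n + N))⟫ : ℂ)‖ ≤
        (2 / δ) * ‖(⟪T y, u (n + N)⟫ : ℂ)‖ := by
      intro n
      have hpos : 0 < a (n + N) := lt_trans (by positivity) (hN (n + N) (by omega))
      have h5 : (⟪y, Jm (u (n + N))⟫ : ℂ) = ⟪T y, u (n + N)⟫ := (hT y (u (n + N))).symm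
      rw [inner_smul_right, h5, norm_mul]
      have h6 : ‖(((a (n + N))⁻¹ : ℝ) : ℂ)‖ = (a (n + N))⁻¹ := by
        rw [Complex.norm_real, Real.norm_eq_abs, abs_of_pos (inv_pos.mpr hpos)]
      rw [h6]
      apply mul_le_mul_of_nonneg_right _ (norm_nonneg _)
      rw [inv_le_comm₀ hpos (by positivity), inv_div]
      linarith [hN (n + N) (by omega)]
    have hz : Tendsto (fun n => ‖(⟪T y, u (n + N)⟫ : ℂ)‖) atTop (𝓝 0) := by
      have := ((hu2 (T y)).comp (tendsto_add_atTop_nat N))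
      exact (tendsto_zero_iff_norm_tendsto_zero.mp this)
    have := hz.const_mul (2 / δ)
    rw [mul_zero] at this
    exact tendsto_zero_iff_norm_tendsto_zero.mpr (squeeze_zero_norm (fun n => by simpa using hb n) this)
  · have hb : ∀ n, ‖(((a (n + N))⁻¹ : ℝ) : ℂ) • Jm (u (n + N)) -
        (lam : ℂ) • (Jm.comp T) ((((a (n + N))⁻¹ : ℝ) : ℂ) • Jm (u (n + N)))‖ ≤
        (2 / δ) * (‖Jm‖ * ‖opS Jm T lam (u (n + N))‖) := by
      intro n
      have hpos : 0 < a (n + N) := lt_trans (by positivity) (hN (n + N) (by omega))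
      have h7 : Jm (u (n + N)) - (lam : ℂ) • (Jm.comp T) (Jm (u (n + N))) =
          Jm (opS Jm T lam (u (n + N))) := by
        rw [opS_apply, map_sub, map_smul]; rfl
      have h8 : (((a (n + N))⁻¹ : ℝ) : ℂ) • Jm (u (n + N)) -
          (lam : ℂ) • (Jm.comp T) ((((a (n + N))⁻¹ : ℝ) : ℂ) • Jm (u (n + N))) =
          (((a (n + N))⁻¹ : ℝ) : ℂ) • (Jm (u (n + N)) - (lam : ℂ) • (Jm.comp T) (Jm (u (n + N)))) := by
        rw [map_smul, smul_sub]
        rw [smul_comm]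
      rw [h8, h7, norm_smul]
      have h6 : ‖(((a (n + N))⁻¹ : ℝ) : ℂ)‖ = (a (n + N))⁻¹ := by
        rw [Complex.norm_real, Real.norm_eq_abs, abs_of_pos (inv_pos.mpr hpos)]
      rw [h6]
      have h9 : ‖Jm (opS Jm T lam (u (n + N)))‖ ≤ ‖Jm‖ * ‖opS Jm T lam (u (n + N))‖ :=
        Jm.le_opNorm _
      have h10 : (a (n + N))⁻¹ ≤ 2 / δ := by
        rw [inv_le_comm₀ hpos (by positivity), inv_div]
        linarith [hN (n + N) (by omega)]
      calc (a (n + N))⁻¹ * ‖Jm (opS Jm T lam (u (n + N)))‖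
          ≤ (2 / δ) * ‖Jm (opS Jm T lam (u (n + N)))‖ :=
            mul_le_mul_of_nonneg_right h10 (norm_nonneg _)
        _ ≤ (2 / δ) * (‖Jm‖ * ‖opS Jm T lam (u (n + N))‖) :=
            mul_le_mul_of_nonneg_left h9 (by positivity)
    have hz : Tendsto (fun n => (2 / δ) * (‖Jm‖ * ‖opS Jm T lam (u (n + N))‖)) atTop (𝓝 0) := by
      have := (hu3.comp (tendsto_add_atTop_nat N)).const_mul ‖Jm‖
      rw [mul_zero] at this
      have := this.const_mul (2 / δ)
      rw [mul_zero] at this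
      exact this
    exact squeeze_zero (fun n => norm_nonneg _) hb hz

lemma ortho_seq (S : E →L[ℂ] E)
    (h : ∀ V : Submodule ℂ E, FiniteDimensional ℂ V → ∀ ε : ℝ, 0 < ε →
      ∃ v : E, ‖v‖ = 1 ∧ (∀ w ∈ V, ⟪w, v⟫ = (0 : ℂ)) ∧ ‖S v‖ < ε) :
    ∃ v : ℕ → E, (∀ n, ‖v n‖ = 1) ∧
      (∀ y : E, Tendsto (fun n => (⟪y, v n⟫ : ℂ)) atTop (𝓝 0)) ∧
      Tendsto (fun n => ‖S (v n)‖) atTop (𝓝 0) := by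
  classical
  choose f hf1 hf2 hf3 using h
  let g : ℕ → List E := fun n => Nat.rec []
    (fun k l => f (Submodule.span ℂ {x | x ∈ l})
      (FiniteDimensional.span_of_finite ℂ l.finite_toSet) (1 / (k + 1)) (by positivity) :: l) n
  let v : ℕ → E := fun n => f (Submodule.span ℂ {x | x ∈ g n})
    (FiniteDimensional.span_of_finite ℂ (g n).finite_toSet) (1 / (n + 1)) (by positivity)
  have hg : ∀ n, g (n + 1) = v n :: g n := fun n => rfl
  have hv1 : ∀ n, ‖v n‖ = 1 := fun n => hf1 _ _ _ _
  have hv2 : ∀ n, ∀ w ∈ Submodule.span ℂ {x | x ∈ g n}, ⟪w, v n⟫ = (0 : ℂ) :=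
    fun n => hf2 _ _ _ _
  have hv3 : ∀ n, ‖S (v n)‖ < 1 / (n + 1) := fun n => hf3 _ _ _ _
  have hmem : ∀ m n, m < n → v m ∈ g n := by
    intro m n
    induction n with
    | zero => omega
    | succ k ih =>
      intro hmk
      rw [hg k]
      rcases Nat.lt_succ_iff_lt_or_eq.mp hmk with h' | h'
      · exact List.mem_cons_of_mem _ (ih h')
      · subst h'; exact List.mem_cons_self
  have horth : ∀ m n, m < n → ⟪v m, v n⟫ = (0 : ℂ) := by
    intro m n hmn
    exact hv2 n (v m) (Submodule.subset_span (hmem m n hmn))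
  have hON : Orthonormal ℂ v := by
    rw [orthonormal_iff_ite]
    intro i j
    by_cases hij : i = j
    · subst hij
      simp only [if_pos rfl]
      rw [@inner_self_eq_norm_sq_to_K ℂ, hv1 i]
      norm_num
    · rw [if_neg hij]
      rcases lt_or_gt_of_ne hij with h' | h'
      · exact horth i j h'
      · rw [← inner_conj_symm, horth j i h', map_zero]
  refine ⟨v, hv1, ?_, ?_⟩
  · intro y
    have hsum : Summable fun n => ‖(⟪v n, y⟫ : ℂ)‖ ^ 2 := hON.inner_products_summable _
    have h0 : Tendsto (fun n => ‖(⟪v n, y⟫ : ℂ)‖ ^ 2) atTop (𝓝 0) := hsum.tendsto_atTop_zero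
    have h1 : Tendsto (fun n => ‖(⟪v n, y⟫ : ℂ)‖) atTop (𝓝 0) := by
      have := h0.sqrt
      rw [Real.sqrt_zero] at this
      have heq : ∀ n, Real.sqrt (‖(⟪v n, y⟫ : ℂ)‖ ^ 2) = ‖(⟪v n, y⟫ : ℂ)‖ :=
        fun n => Real.sqrt_sq (norm_nonneg _)
      simpa [heq] using this
    rw [tendsto_zero_iff_norm_tendsto_zero]
    exact h1.congr fun n => norm_inner_symm (v n) y
  · apply squeeze_zero (fun n => norm_nonneg _) (fun n => (hv3 n).le)
    exact tendsto_one_div_add_atTop_nhds_zero_nat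

lemma kerFinDim (Jm : E →L[ℂ] F) (T : F →L[ℂ] E)
    (hT : ∀ (x : F) (v : E), ⟪T x, v⟫ = ⟪x, Jm v⟫) (lam : ℝ)
    (hni : ¬ InEssSpec (Jm.comp T) lam) :
    FiniteDimensional ℂ (LinearMap.ker (opS Jm T lam : E →ₗ[ℂ] E)) := by
  by_contra hinf
  apply hni
  set S := opS Jm T lam with hS
  have hstep : ∀ V : Submodule ℂ E, FiniteDimensional ℂ V → ∀ ε : ℝ, 0 < ε →
      ∃ v : E, ‖v‖ = 1 ∧ (∀ w ∈ V, ⟪w, v⟫ = (0 : ℂ)) ∧ ‖S v‖ < ε := by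
    intro V hV ε hε
    haveI := hV
    set φ : (LinearMap.ker (S : E →ₗ[ℂ] E)) →ₗ[ℂ] V :=
      (Submodule.orthogonalProjection V).toLinearMap.comp ((LinearMap.ker (S : E →ₗ[ℂ] E)).subtype) with hφ
    by_cases hker : LinearMap.ker φ = ⊥
    · exact absurd (FiniteDimensional.of_injective φ (LinearMap.ker_eq_bot.mp hker)) hinf
    · obtain ⟨x, hxk, hx0⟩ := Submodule.exists_mem_ne_zero_of_ne_bot hker
      have hxproj : Submodule.orthogonalProjection V (x : E) = 0 := hxk
      have hxorth : (x : E) ∈ Vᗮ := Submodule.orthogonalProjection_eq_zero_iff.mp hxproj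
      have hxne : (x : E) ≠ 0 := fun h => hx0 (Subtype.ext h)
      refine ⟨((‖(x : E)‖⁻¹ : ℝ) : ℂ) • (x : E), ?_, ?_, ?_⟩
      · rw [norm_smul, Complex.norm_real, Real.norm_eq_abs,
          abs_of_pos (inv_pos.mpr (norm_pos_iff.mpr hxne))]
        exact inv_mul_cancel₀ (ne_of_gt (norm_pos_iff.mpr hxne))
      · intro w hw
        rw [inner_smul_right]
        rw [(Submodule.mem_orthogonal V (x : E)).mp hxorth w hw, mul_zero]
      · have hx : S (x : E) = 0 := x.2
        rw [map_smul, hx, smul_zero, norm_zero]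
        exact hε
  obtain ⟨v, h1, h2, h3⟩ := ortho_seq S hstep
  exact transfer Jm T hT lam v h1 h2 h3

lemma boundedBelow (Jm : E →L[ℂ] F) (T : F →L[ℂ] E)
    (hT : ∀ (x : F) (v : E), ⟪T x, v⟫ = ⟪x, Jm v⟫) (lam : ℝ)
    (hni : ¬ InEssSpec (Jm.comp T) lam) :
    ∃ c : ℝ, 0 < c ∧ ∀ v ∈ (LinearMap.ker (opS Jm T lam : E →ₗ[ℂ] E))ᗮ, c * ‖v‖ ≤ ‖opS Jm T lam v‖ := by
  haveI hkf := kerFinDim Jm T hT lam hni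
  set S := opS Jm T lam with hS
  set N : Submodule ℂ E := LinearMap.ker (S : E →ₗ[ℂ] E) with hN
  by_contra hglob
  push_neg at hglob
  apply hni
  -- main claim: failure of global bound gives the step hypothesis for every fin-dim V' ⊇ N
  have hstep0 : ∀ V' : Submodule ℂ E, FiniteDimensional ℂ V' → N ≤ V' → ∀ ε : ℝ, 0 < ε →
      ∃ v : E, ‖v‖ = 1 ∧ v ∈ V'ᗮ ∧ ‖S v‖ < ε := by
    intro V' hV' hNV' ε hε
    by_contra hno
    push_neg at hno
    -- then S is bounded below by ε on unit sphere of V'ᗮ, hence everywhere on V'ᗮ: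
    have hbelow : ∀ r ∈ V'ᗮ, ε * ‖r‖ ≤ ‖S r‖ := by
      intro r hr
      rcases eq_or_ne r 0 with rfl | hr0
      · simp
      · have hnr : 0 < ‖r‖ := norm_pos_iff.mpr hr0
        have h1 : ‖((‖r‖⁻¹ : ℝ) : ℂ) • r‖ = 1 := by
          rw [norm_smul, Complex.norm_real, Real.norm_eq_abs, abs_of_pos (inv_pos.mpr hnr)]
          exact inv_mul_cancel₀ (ne_of_gt hnr)
        have h2 := hno (((‖r‖⁻¹ : ℝ) : ℂ) • r) h1 (Submodule.smul_mem _ _ hr)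
        rw [map_smul, norm_smul, Complex.norm_real, Real.norm_eq_abs,
          abs_of_pos (inv_pos.mpr hnr)] at h2
        rw [mul_comm]
        rwa [le_inv_mul_iff₀ hnr] at h2
    haveI := hV'
    -- get a global bound with some constant, contradicting hglob;
    -- suppose not: get unit vectors wk ∈ Nᗮ with ‖S wk‖ → 0
    have hw : ∀ k : ℕ, ∃ w : E, w ∈ Nᗮ ∧ ‖w‖ = 1 ∧ ‖S w‖ < 1 / (k + 1) := by
      intro k
      obtain ⟨w, hwN, hwlt⟩ := hglob (1 / (k + 1)) (by positivity)
      have hw0 : w ≠ 0 := by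
        rintro rfl
        rw [norm_zero, mul_zero] at hwlt
        exact absurd hwlt (not_lt.mpr (norm_nonneg _))
      have hnw : 0 < ‖w‖ := norm_pos_iff.mpr hw0
      refine ⟨((‖w‖⁻¹ : ℝ) : ℂ) • w, Submodule.smul_mem _ _ hwN, ?_, ?_⟩
      · rw [norm_smul, Complex.norm_real, Real.norm_eq_abs, abs_of_pos (inv_pos.mpr hnw)]
        exact inv_mul_cancel₀ (ne_of_gt hnw)
      · rw [map_smul, norm_smul, Complex.norm_real, Real.norm_eq_abs,
          abs_of_pos (inv_pos.mpr hnw), inv_mul_lt_iff₀ hnw, mul_comm]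
        exact hwlt
    choose w hw1 hw2 hw3 using hw
    -- decompose w k = m k + r k with m k ∈ V', r k ∈ V'ᗮ
    set m : ℕ → E := fun k => (Submodule.orthogonalProjection V' (w k) : E) with hm
    set r : ℕ → E := fun k => w k - m k with hr
    have hrmem : ∀ k, r k ∈ V'ᗮ := fun k => by exact Submodule.sub_starProjection_mem_orthogonal _
    have hmbound : ∀ k, ‖m k‖ ≤ 1 := by
      intro k
      have := Submodule.orthogonalProjection_norm_le (K := V')
      have h2 := (Submodule.orthogonalProjection V').le_opNorm (w k)
      calc ‖m k‖ = ‖Submodule.orthogonalProjection V' (w k)‖ := rfl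
        _ ≤ ‖Submodule.orthogonalProjection V'‖ * ‖w k‖ := h2
        _ ≤ 1 * 1 := by
            apply mul_le_mul this (le_of_eq (hw2 k)) (norm_nonneg _) zero_le_one
        _ = 1 := one_mul 1
    have hSw : Tendsto (fun k => S (w k)) atTop (𝓝 0) := by
      rw [show (0 : E) = 0 from rfl]
      have : Tendsto (fun k => ‖S (w k)‖) atTop (𝓝 0) := by
        apply squeeze_zero (fun k => norm_nonneg _) (fun k => (hw3 k).le)
        exact tendsto_one_div_add_atTop_nhds_zero_nat
      exact tendsto_zero_iff_norm_tendsto_zero.mpr this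
    -- extract convergent subsequence of m inside V'
    haveI : ProperSpace ↥V' := FiniteDimensional.proper ℂ ↥V'
    set m' : ℕ → ↥V' := fun k => Submodule.orthogonalProjection V' (w k) with hm'
    have hbdd : Bornology.IsBounded (Metric.closedBall (0 : ↥V') 1) :=
      Metric.isBounded_closedBall
    have hmmem : ∀ k, m' k ∈ Metric.closedBall (0 : ↥V') 1 := by
      intro k
      rw [Metric.mem_closedBall, dist_zero_right]
      exact hmbound k
    obtain ⟨mlim', _, φ, hφ, hmφ'⟩ := tendsto_subseq_of_bounded hbdd hmmem
    set mlim : E := (mlim' : E) with hmlimdef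
    have hmlimV' : mlim ∈ V' := Submodule.coe_mem _
    have hmφ : Tendsto (fun k => m (φ k)) atTop (𝓝 mlim) := by
      have hcont : Continuous ((↑) : ↥V' → E) := continuous_subtype_val
      exact ((hcont.tendsto mlim').comp hmφ')
    -- S (r ∘ φ) converges
    have hSr : Tendsto (fun k => S (r (φ k))) atTop (𝓝 (-(S mlim))) := by
      have h1 : Tendsto (fun k => S (w (φ k))) atTop (𝓝 0) := hSw.comp hφ.tendsto_atTop
      have h2 : Tendsto (fun k => S (m (φ k))) atTop (𝓝 (S mlim)) :=
        (S.continuous.tendsto mlim).comp hmφ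
      have h3 := h1.sub h2
      rw [zero_sub] at h3
      have : ∀ k, S (w (φ k)) - S (m (φ k)) = S (r (φ k)) := by
        intro k; rw [hr]; simp [map_sub]
      simpa [this] using h3
    -- r ∘ φ is Cauchy
    have hrc : CauchySeq (fun k => r (φ k)) := by
      apply cauchy_dom (C := ε⁻¹) (inv_pos.mpr hε) hSr.cauchySeq
      intro i j
      have h4 : S (r (φ i)) - S (r (φ j)) = S (r (φ i) - r (φ j)) := (map_sub S _ _).symm
      have h5 : r (φ i) - r (φ j) ∈ V'ᗮ := Submodule.sub_mem _ (hrmem _) (hrmem _)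
      have := hbelow _ h5
      rw [← h4] at this
      rw [inv_mul_eq_div, le_div_iff₀ hε]
      linarith [this]
    obtain ⟨rlim, hrlim⟩ := cauchySeq_tendsto_of_complete hrc
    have hrlimV' : rlim ∈ V'ᗮ := by
      have : IsClosed (V'ᗮ : Set E) := Submodule.isClosed_orthogonal V'
      exact this.mem_of_tendsto hrlim (Eventually.of_forall fun k => hrmem (φ k))
    have hSrlim : S rlim = -(S mlim) :=
      tendsto_nhds_unique ((S.continuous.tendsto rlim).comp hrlim) hSr
    -- w ∘ φ converges to mlim + rlim =: z
    have hwconv : Tendsto (fun k => w (φ k)) atTop (𝓝 (mlim + rlim)) := by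
      have := hmφ.add hrlim
      have heq : ∀ k, m (φ k) + r (φ k) = w (φ k) := by intro k; simp [hr]
      simpa [heq] using this
    set z := mlim + rlim with hz
    have hznorm : ‖z‖ = 1 := by
      have := (continuous_norm.tendsto z).comp hwconv
      have h2 : Tendsto (fun k => ‖w (φ k)‖) atTop (𝓝 1) := by
        simpa [hw2] using tendsto_const_nhds (x := (1:ℝ))
      exact (tendsto_nhds_unique ((continuous_norm.tendsto z).comp hwconv) h2)
    have hzN : z ∈ Nᗮ := by
      have hcl : IsClosed ((Nᗮ : Submodule ℂ E) : Set E) := Submodule.isClosed_orthogonal N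
      exact hcl.mem_of_tendsto hwconv (Eventually.of_forall fun k => hw1 (φ k))
    have hSz : S z = 0 := by
      rw [hz, map_add, hSrlim]
      abel
    have hzker : z ∈ N := hSz
    have hz0 : z = 0 := by
      have := (Submodule.mem_orthogonal N z).mp hzN z hzker
      exact inner_self_eq_zero.mp this
    rw [hz0, norm_zero] at hznorm
    exact absurd hznorm (by norm_num)
  -- now produce the singular sequence
  have hstep : ∀ V : Submodule ℂ E, FiniteDimensional ℂ V → ∀ ε : ℝ, 0 < ε →
      ∃ v : E, ‖v‖ = 1 ∧ (∀ w ∈ V, ⟪w, v⟫ = (0 : ℂ)) ∧ ‖S v‖ < ε := by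
    intro V hV ε hε
    haveI := hV
    haveI : FiniteDimensional ℂ (V ⊔ N : Submodule ℂ E) := Submodule.finiteDimensional_sup V N
    obtain ⟨v, h1, h2, h3⟩ := hstep0 (V ⊔ N) this le_sup_right ε hε
    exact ⟨v, h1, fun w hw => (Submodule.mem_orthogonal _ v).mp h2 w (Submodule.mem_sup_left hw), h3⟩
  obtain ⟨v, h1, h2, h3⟩ := ortho_seq S hstep
  exact transfer Jm T hT lam v h1 h2 h3

lemma rangeClosed_A (Jm : E →L[ℂ] F) (T : F →L[ℂ] E)
    (hT : ∀ (x : F) (v : E), ⟪T x, v⟫ = ⟪x, Jm v⟫) (lam : ℝ)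
    (hni : ¬ InEssSpec (Jm.comp T) lam) (H0' : Submodule ℂ E) [CompleteSpace H0'] :
    ∀ y : E, y ∈ closure ((opS Jm T lam) '' (H0' : Set E)) →
      ∃ h ∈ H0', opS Jm T lam h = y := by
  intro y hy
  set S := opS Jm T lam with hS
  haveI hkf : FiniteDimensional ℂ (LinearMap.ker (S : E →ₗ[ℂ] E)) := kerFinDim Jm T hT lam hni
  obtain ⟨c, hc, hb⟩ := boundedBelow Jm T hT lam hni
  set N : Submodule ℂ E := LinearMap.ker (S : E →ₗ[ℂ] E) with hN
  haveI : CompleteSpace N := FiniteDimensional.complete ℂ N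
  obtain ⟨x, hxmem, hxlim⟩ := mem_closure_iff_seq_limit.mp hy
  choose h hhmem hhx using hxmem
  have hSh : Tendsto (fun n => S (h n)) atTop (𝓝 y) := by
    simpa [hhx] using hxlim
  set r : ℕ → E := fun n => h n - (Submodule.orthogonalProjection N (h n) : E) with hr
  have hrorth : ∀ n, r n ∈ Nᗮ := fun n => by exact Submodule.sub_starProjection_mem_orthogonal _
  have hSr : ∀ n, S (r n) = S (h n) := by
    intro n
    have hk : (Submodule.orthogonalProjection N (h n) : E) ∈ N := Submodule.coe_mem _
    rw [hr]
    simp only [map_sub]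
    rw [show S ((Submodule.orthogonalProjection N (h n) : E)) = 0 from hk, sub_zero]
  have hrc : CauchySeq r := by
    apply cauchy_dom (C := c⁻¹) (inv_pos.mpr hc) hSh.cauchySeq
    intro i j
    have h5 : r i - r j ∈ Nᗮ := Submodule.sub_mem _ (hrorth _) (hrorth _)
    have := hb _ h5
    rw [map_sub, hSr, hSr] at this
    rw [inv_mul_eq_div, le_div_iff₀ hc]
    linarith
  obtain ⟨rlim, hrlim⟩ := cauchySeq_tendsto_of_complete hrc
  have hSrlim : S rlim = y := by
    have h1 : Tendsto (fun n => S (r n)) atTop (𝓝 (S rlim)) :=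
      (S.continuous.tendsto rlim).comp hrlim
    have h2 : Tendsto (fun n => S (r n)) atTop (𝓝 y) := by
      simpa [hSr] using hSh
    exact tendsto_nhds_unique h1 h2
  have hrmem : rlim ∈ (H0' ⊔ N : Submodule ℂ E) := by
    have hcl : IsClosed ((H0' ⊔ N : Submodule ℂ E) : Set E) := sup_closed H0' N
    apply hcl.mem_of_tendsto hrlim
    apply Eventually.of_forall
    intro n
    refine Submodule.sub_mem _ (Submodule.mem_sup_left (hhmem n))
      (Submodule.mem_sup_right (Submodule.coe_mem _))
  obtain ⟨h0, hh0, k, hk, hsum⟩ := Submodule.mem_sup.mp hrmem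
  refine ⟨h0, hh0, ?_⟩
  have : S rlim = S h0 := by
    rw [← hsum, map_add, show S k = 0 from hk, add_zero]
  rw [← this, hSrlim]

lemma rangeClosed_B (Jm : E →L[ℂ] F) (TN : F →L[ℂ] E)
    (hTN : ∀ (x : F) (v : E), ⟪TN x, v⟫ = ⟪x, Jm v⟫) (lam : ℝ)
    (H0' : Submodule ℂ E) [CompleteSpace H0']
    (TD : F →L[ℂ] E) (hTDmem : ∀ x : F, TD x ∈ H0')
    (hTD : ∀ (x : F), ∀ v ∈ H0', ⟪TD x, v⟫ = ⟪x, Jm v⟫)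
    (hni : ¬ InEssSpec (Jm.comp TD) lam) :
    ∀ y : E, y ∈ closure ((opS Jm TN lam) '' (H0' : Set E)) →
      ∃ h ∈ H0', opS Jm TN lam h = y := by
  intro y hy
  set S := opS Jm TN lam with hS
  -- the restricted operators on ↥H0'
  set Jm0 : ↥H0' →L[ℂ] F := Jm.comp H0'.subtypeL with hJm0
  set T0 : F →L[ℂ] ↥H0' := TD.codRestrict H0' hTDmem with hT0def
  have hT0 : ∀ (x : F) (v : ↥H0'), ⟪T0 x, v⟫ = ⟪x, Jm0 v⟫ := by
    intro x v
    have : (⟪T0 x, v⟫ : ℂ) = ⟪TD x, (v : E)⟫ := rfl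
    rw [this, hTD x v v.2]
    rfl
  have hcompeq : Jm0.comp T0 = Jm.comp TD := by
    ext x
    rfl
  have hni0 : ¬ InEssSpec (Jm0.comp T0) lam := by rwa [hcompeq]
  set S0 := opS Jm0 T0 lam with hS0
  -- projection onto H0' maps TN x to TD x
  set P := Submodule.orthogonalProjection H0' with hP
  have hPTN : ∀ x : F, (P (TN x) : E) = TD x := by
    intro x
    apply Submodule.eq_starProjection_of_mem_of_inner_eq_zero (hTDmem x)
    intro w hw
    rw [inner_sub_left, hTN, hTD x w hw, sub_self]
  have hPS : ∀ h : ↥H0', P (S (h : E)) = S0 h := by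
    intro h
    apply Subtype.ext
    have h1 : S (h : E) = (h : E) - (lam : ℂ) • TN (Jm (h : E)) := rfl
    rw [h1, map_sub, map_smul]
    have h2 : (P ((h : E)) : E) = (h : E) :=
      congrArg Subtype.val (Submodule.orthogonalProjection_mem_subspace_eq_self (K := H0') h)
    have h3 : ((P (TN (Jm (h : E)))) : E) = TD (Jm (h : E)) := hPTN _
    have h4 : ((S0 h : ↥H0') : E) = (h : E) - (lam : ℂ) • TD (Jm (h : E)) := rfl
    rw [h4]
    push_cast
    rw [h2, h3]
  haveI hkf : FiniteDimensional ℂ (LinearMap.ker (S0 : ↥H0' →ₗ[ℂ] ↥H0')) := kerFinDim Jm0 T0 hT0 lam hni0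
  obtain ⟨c, hc, hb⟩ := boundedBelow Jm0 T0 hT0 lam hni0
  set M : Submodule ℂ ↥H0' := LinearMap.ker (S0 : ↥H0' →ₗ[ℂ] ↥H0') with hM
  haveI : CompleteSpace M := FiniteDimensional.complete ℂ M
  obtain ⟨x, hxmem, hxlim⟩ := mem_closure_iff_seq_limit.mp hy
  choose h hhmem hhx using hxmem
  have hSh : Tendsto (fun n => S (h n)) atTop (𝓝 y) := by
    simpa [hhx] using hxlim
  set h' : ℕ → ↥H0' := fun n => ⟨h n, hhmem n⟩ with hh'
  set r' : ℕ → ↥H0' := fun n => h' n - (Submodule.orthogonalProjection M (h' n) : ↥H0') with hr'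
  have hrorth : ∀ n, r' n ∈ Mᗮ := fun n => by exact Submodule.sub_starProjection_mem_orthogonal _
  have hSr : ∀ n, S0 (r' n) = S0 (h' n) := by
    intro n
    have hk : ((Submodule.orthogonalProjection M (h' n)) : ↥H0') ∈ M := Submodule.coe_mem _
    rw [hr']
    simp only [map_sub]
    rw [show S0 (((Submodule.orthogonalProjection M (h' n)) : ↥H0')) = 0 from hk, sub_zero]
  have hS0h : Tendsto (fun n => S0 (h' n)) atTop (𝓝 (P y)) := by
    have h1 : Tendsto (fun n => P (S (h n))) atTop (𝓝 (P y)) :=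
      (P.continuous.tendsto y).comp hSh
    have h2 : ∀ n, P (S (h n)) = S0 (h' n) := fun n => hPS (h' n)
    simpa [h2] using h1
  have hrc : CauchySeq r' := by
    apply cauchy_dom (C := c⁻¹) (inv_pos.mpr hc) hS0h.cauchySeq
    intro i j
    have h5 : r' i - r' j ∈ Mᗮ := Submodule.sub_mem _ (hrorth _) (hrorth _)
    have := hb _ h5
    rw [map_sub, hSr, hSr] at this
    rw [inv_mul_eq_div, le_div_iff₀ hc]
    linarith
  obtain ⟨rlim, hrlim⟩ := cauchySeq_tendsto_of_complete hrc
  -- now S (coe of the kernel parts) converges to y - S ↑rlim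
  have hcoe : Continuous ((↑) : ↥H0' → E) := continuous_subtype_val
  have hrlimE : Tendsto (fun n => ((r' n : ↥H0') : E)) atTop (𝓝 ((rlim : ↥H0') : E)) :=
    (hcoe.tendsto rlim).comp hrlim
  set ek : ℕ → E := fun n => (((Submodule.orthogonalProjection M (h' n) : ↥H0')) : E) with hek
  have hSek : Tendsto (fun n => S (ek n)) atTop (𝓝 (y - S ((rlim : ↥H0') : E))) := by
    have h1 : ∀ n, S (ek n) = S (h n) - S ((r' n : ↥H0') : E) := by
      intro n
      have : ek n = (h n : E) - ((r' n : ↥H0') : E) := by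
        rw [hek, hr']
        push_cast
        abel
      rw [this, map_sub]
    have h2 : Tendsto (fun n => S (h n) - S ((r' n : ↥H0') : E)) atTop
        (𝓝 (y - S ((rlim : ↥H0') : E))) :=
      hSh.sub ((S.continuous.tendsto _).comp hrlimE)
    simpa [h1] using h2
  -- kernel part lives in a finite-dimensional subspace of E, whose image under S is closed
  set MM : Submodule ℂ E := M.map (H0'.subtype) with hMM
  haveI : FiniteDimensional ℂ MM := Module.Finite.map _ _
  set W : Submodule ℂ E := MM.map (S : E →ₗ[ℂ] E) with hW
  haveI : FiniteDimensional ℂ W := Module.Finite.map _ _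
  have hWclosed : IsClosed (W : Set E) := Submodule.closed_of_finiteDimensional W
  have hekW : ∀ n, S (ek n) ∈ W := by
    intro n
    refine Submodule.mem_map_of_mem ?_
    exact Submodule.mem_map_of_mem (Submodule.coe_mem _)
  have hlimW : y - S ((rlim : ↥H0') : E) ∈ W :=
    hWclosed.mem_of_tendsto hSek (Eventually.of_forall hekW)
  obtain ⟨z, hzMM, hzS⟩ := Submodule.mem_map.mp hlimW
  have hzH0 : z ∈ H0' := by
    obtain ⟨m, _, rfl⟩ := Submodule.mem_map.mp hzMM
    exact Submodule.coe_mem _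
  refine ⟨z + ((rlim : ↥H0') : E), Submodule.add_mem _ hzH0 (Submodule.coe_mem _), ?_⟩
  rw [map_add]
  have : S z = y - S ((rlim : ↥H0') : E) := hzS
  rw [this]
  abel

end Aux

open Filter Topology in
/- If `λ ∉ σ_ess(A_N) ∩ σ_ess(A_D)` then `G_λ⁰ = ker B_λ = E_D(λ)H + E_N(λ)H`:
`u` lies in `G_λ` and satisfies `a[u,v] = λ(u,v)` for all `v ∈ G_λ` if and only if
`u` is the sum of a Neumann and a Dirichlet `λ`-eigenvector. -/
theorem stmt12
    (J : H1 →L[ℂ] H) (hJinj : Function.Injective J) (hJdense : DenseRange J)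
    (H0 : Submodule ℂ H1) [CompleteSpace H0]
    (hH0dense : DenseRange (fun v : H0 => J v))
    (TN : H →L[ℂ] H1) (hTN : ∀ (u : H) (v : H1), ⟪TN u, v⟫ = ⟪u, J v⟫)
    (TD : H →L[ℂ] H1) (hTDmem : ∀ u : H, TD u ∈ H0)
    (hTD : ∀ (u : H), ∀ v ∈ H0, ⟪TD u, (v : H1)⟫ = ⟪u, J v⟫)
    (lam : ℝ)
    (hess : ¬ (InEssSpec (J.comp TN) lam ∧ InEssSpec (J.comp TD) lam)) :
    ∀ u : H1,
      (MemA J H0 u ((lam : ℂ) • J u) ∧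
        ∀ v : H1, MemA J H0 v ((lam : ℂ) • J v) →
          ⟪u, v⟫ = (lam : ℂ) * ⟪J u, J v⟫) ↔
      (∃ u1 u2 : H1, u1 = (lam : ℂ) • TN (J u1) ∧ u2 = (lam : ℂ) • TD (J u2) ∧
        u = u1 + u2) := by
  intro u
  set S := opS J TN lam with hSdef
  have hSapp : ∀ w : H1, S w = w - (lam : ℂ) • TN (J w) := fun w => rfl
  have hconj : (starRingEnd ℂ) ((lam : ℝ) : ℂ) = ((lam : ℝ) : ℂ) := Complex.conj_ofReal lam
  constructor
  · -- hard direction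
    rintro ⟨hG, hperp⟩
    set W : Submodule ℂ H1 := H0.map (S : H1 →ₗ[ℂ] H1) with hW
    have hwmem : S u ∈ Wᗮᗮ := by
      rw [Submodule.mem_orthogonal]
      intro z hz
      -- z ∈ Wᗮ means S z is a-orthogonal to H0, i.e. z ∈ G_lam
      have hzG : MemA J H0 z ((lam : ℂ) • J z) := by
        intro v hv
        have h1 : (⟪S v, z⟫ : ℂ) = 0 :=
          (Submodule.mem_orthogonal W z).mp hz _ (Submodule.mem_map_of_mem hv)
        rw [hSapp, inner_sub_left, inner_smul_left, hconj, hTN] at h1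
        have h2 : (⟪v, z⟫ : ℂ) = (lam : ℂ) * ⟪J v, J z⟫ := by linear_combination h1
        calc (⟪z, v⟫ : ℂ) = (starRingEnd ℂ) ⟪v, z⟫ := (inner_conj_symm _ _).symm
          _ = (starRingEnd ℂ) ((lam : ℂ) * ⟪J v, J z⟫) := by rw [h2]
          _ = (lam : ℂ) * ⟪J z, J v⟫ := by rw [map_mul, hconj, inner_conj_symm]
          _ = ⟪(lam : ℂ) • J z, J v⟫ := by rw [inner_smul_left, hconj]
      have h3 := hperp z hzG
      have h4 : (⟪S u, z⟫ : ℂ) = 0 := by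
        rw [hSapp, inner_sub_left, inner_smul_left, hconj, hTN]
        linear_combination h3
      rw [← inner_conj_symm, h4, map_zero]
    have hcl : S u ∈ closure ((S : H1 → H1) '' (H0 : Set H1)) := by
      have h5 : Wᗮᗮ = W.topologicalClosure := Submodule.orthogonal_orthogonal_eq_closure W
      rw [h5, ← SetLike.mem_coe, Submodule.topologicalClosure_coe] at hwmem
      simpa [hW, Submodule.map_coe] using hwmem
    have hex : ∃ h0 ∈ H0, S h0 = S u := by
      rcases not_and_or.mp hess with hni | hni
      · exact rangeClosed_A J TN hTN lam hni H0 (S u) hcl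
      · exact rangeClosed_B J TN hTN lam H0 TD hTDmem hTD hni (S u) hcl
    obtain ⟨h0, hh0, hSh0⟩ := hex
    have hu1ker : S (u - h0) = 0 := by rw [map_sub, hSh0, sub_self]
    have e1 : u - h0 = (lam : ℂ) • TN (J (u - h0)) := by
      have := hu1ker
      rw [hSapp] at this
      exact sub_eq_zero.mp this
    have e2 : h0 = (lam : ℂ) • TD (J h0) := by
      set d : H1 := h0 - (lam : ℂ) • TD (J h0) with hd
      have hdH0 : d ∈ H0 := Submodule.sub_mem _ hh0 (Submodule.smul_mem _ _ (hTDmem _))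
      have hdz : ∀ v ∈ H0, (⟪v, d⟫ : ℂ) = 0 := by
        intro v hv
        have hvu : (⟪v, u⟫ : ℂ) = (lam : ℂ) * ⟪J v, J u⟫ := by
          have := hG v hv
          rw [inner_smul_left, hconj] at this
          calc (⟪v, u⟫ : ℂ) = (starRingEnd ℂ) ⟪u, v⟫ := (inner_conj_symm _ _).symm
            _ = (starRingEnd ℂ) ((lam : ℂ) * ⟪J u, J v⟫) := by rw [this]
            _ = (lam : ℂ) * ⟪J v, J u⟫ := by rw [map_mul, hconj, inner_conj_symm]
        have hvu1 : (⟪v, u - h0⟫ : ℂ) = (lam : ℂ) * ⟪J v, J (u - h0)⟫ := by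
          conv_lhs => rw [e1]
          rw [inner_smul_right]
          congr 1
          calc (⟪v, TN (J (u - h0))⟫ : ℂ) = (starRingEnd ℂ) ⟪TN (J (u - h0)), v⟫ :=
                (inner_conj_symm _ _).symm
            _ = (starRingEnd ℂ) ⟪J (u - h0), J v⟫ := by rw [hTN]
            _ = ⟪J v, J (u - h0)⟫ := inner_conj_symm _ _
        have hvtd : (⟪v, TD (J h0)⟫ : ℂ) = ⟪J v, J h0⟫ := by
          calc (⟪v, TD (J h0)⟫ : ℂ) = (starRingEnd ℂ) ⟪TD (J h0), v⟫ :=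
                (inner_conj_symm _ _).symm
            _ = (starRingEnd ℂ) ⟪J h0, J v⟫ := by rw [hTD _ v hv]
            _ = ⟪J v, J h0⟫ := inner_conj_symm _ _
        have hsplit : (⟪v, h0⟫ : ℂ) = ⟪v, u⟫ - ⟪v, u - h0⟫ := by
          rw [← inner_sub_right]
          congr 1
          abel
        rw [hd, inner_sub_right, inner_smul_right, hvtd, hsplit, hvu, hvu1]
        have hJ : J u = J (u - h0) + J h0 := by
          rw [← map_add]
          congr 1
          abel
        rw [hJ, inner_add_right]
        ring
      have : (⟪d, d⟫ : ℂ) = 0 := hdz d hdH0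
      have hd0 : d = 0 := inner_self_eq_zero.mp this
      rw [hd] at hd0
      exact sub_eq_zero.mp hd0
    exact ⟨u - h0, h0, e1, e2, by abel⟩
  · -- easy direction
    rintro ⟨u1, u2, h1, h2, rfl⟩
    have hu2H0 : u2 ∈ H0 := by
      rw [h2]
      exact Submodule.smul_mem _ _ (hTDmem _)
    have key1 : ∀ v : H1, (⟪u1, v⟫ : ℂ) = (lam : ℂ) * ⟪J u1, J v⟫ := by
      intro v
      conv_lhs => rw [h1]
      rw [inner_smul_left, hconj, hTN]
    constructor
    · intro v hv
      have key2 : (⟪u2, v⟫ : ℂ) = (lam : ℂ) * ⟪J u2, J v⟫ := by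
        conv_lhs => rw [h2]
        rw [inner_smul_left, hconj, hTD _ v hv]
      rw [inner_add_left, key1, key2, map_add, inner_smul_left, hconj, inner_add_left]
      ring
    · intro v hv
      have key2 : (⟪u2, v⟫ : ℂ) = (lam : ℂ) * ⟪J u2, J v⟫ := by
        have := hv u2 hu2H0
        rw [inner_smul_left, hconj] at this
        calc (⟪u2, v⟫ : ℂ) = (starRingEnd ℂ) ⟪v, u2⟫ := (inner_conj_symm _ _).symm
          _ = (starRingEnd ℂ) ((lam : ℂ) * ⟪J v, J u2⟫) := by rw [this]
          _ = (lam : ℂ) * ⟪J u2, J v⟫ := by rw [map_mul, hconj, inner_conj_symm]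
      rw [inner_add_left, key1, key2, map_add, inner_add_left]
      ring

end
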